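/- For 0 < α ≤ 1, the weights γ_n of the backward-shift representation of D on H_α, given by γ_n² = 2^{2/α}(n+1)²Γ((2/α)(n+1))/Γ((2/α)(n+2)), satisfy γ_n ~ c·n^{1-1/α} as n → ∞ for some constant c > 0; in particular γ_n → 0 when 0 < α < 1. -/

import Mathlib

open Filter

/-- Gautschi-type upper bound from log-convexity of `Γ`. -/
lemma gamma_upper {x s : ℝ} (hx : 0 < x) (hs0 : 0 ≤ s) (hs1 : s ≤ 1) :
    Real.Gamma (x + s) ≤ Real.Gamma x * x ^ s := by
  have hx1 : (0:ℝ) < x + 1 := by linarith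
  have hΓx := Real.Gamma_pos_of_pos hx
  have hxs : 0 < x + s := by linarith
  have key := Real.convexOn_log_Gamma.2 (Set.mem_Ioi.2 hx) (Set.mem_Ioi.2 hx1)
      (by linarith : (0:ℝ) ≤ 1 - s) hs0 (by ring)
  simp only [Function.comp, smul_eq_mul] at key
  have hcomb : (1 - s) * x + s * (x + 1) = x + s := by ring
  rw [hcomb, Real.Gamma_add_one hx.ne', Real.log_mul hx.ne' hΓx.ne'] at key
  have hle : Real.log (Real.Gamma (x + s)) ≤ Real.log (Real.Gamma x) + s * Real.log x := by
    nlinarith [key]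
  calc Real.Gamma (x + s) = Real.exp (Real.log (Real.Gamma (x + s))) :=
        (Real.exp_log (Real.Gamma_pos_of_pos hxs)).symm
    _ ≤ Real.exp (Real.log (Real.Gamma x) + s * Real.log x) := Real.exp_le_exp.2 hle
    _ = Real.Gamma x * x ^ s := by
        rw [Real.exp_add, Real.exp_log hΓx, Real.rpow_def_of_pos hx, mul_comm s]

/-- Gautschi-type lower bound from log-convexity of `Γ`. -/
lemma gamma_lower {x s : ℝ} (hx : 0 < x) (hs0 : 0 ≤ s) (hs1 : s ≤ 1) :
    x * Real.Gamma x ≤ Real.Gamma (x + s) * (x + s) ^ (1 - s) := by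
  have hxs : 0 < x + s := by linarith
  have hxs1 : (0:ℝ) < x + s + 1 := by linarith
  have hΓx := Real.Gamma_pos_of_pos hx
  have hΓxs := Real.Gamma_pos_of_pos hxs
  have key := Real.convexOn_log_Gamma.2 (Set.mem_Ioi.2 hxs) (Set.mem_Ioi.2 hxs1)
      hs0 (by linarith : (0:ℝ) ≤ 1 - s) (by ring)
  simp only [Function.comp, smul_eq_mul] at key
  have hcomb : s * (x + s) + (1 - s) * (x + s + 1) = x + 1 := by ring
  rw [hcomb, Real.Gamma_add_one hx.ne'] at key
  have h2 : Real.Gamma (x + s + 1) = (x + s) * Real.Gamma (x + s) :=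
    Real.Gamma_add_one hxs.ne'
  rw [h2, Real.log_mul hx.ne' hΓx.ne', Real.log_mul hxs.ne' hΓxs.ne'] at key
  have hle : Real.log x + Real.log (Real.Gamma x) ≤
      Real.log (Real.Gamma (x + s)) + (1 - s) * Real.log (x + s) := by nlinarith [key]
  calc x * Real.Gamma x = Real.exp (Real.log x + Real.log (Real.Gamma x)) := by
        rw [Real.exp_add, Real.exp_log hx, Real.exp_log hΓx]
    _ ≤ Real.exp (Real.log (Real.Gamma (x + s)) + (1 - s) * Real.log (x + s)) :=
        Real.exp_le_exp.2 hle
    _ = Real.Gamma (x + s) * (x + s) ^ (1 - s) := by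
        rw [Real.exp_add, Real.exp_log hΓxs, Real.rpow_def_of_pos hxs, mul_comm (1 - s)]

lemma ratio_tendsto_base {s : ℝ} (hs0 : 0 ≤ s) (hs1 : s ≤ 1) :
    Tendsto (fun x => Real.Gamma (x + s) / (Real.Gamma x * x ^ s)) atTop (nhds 1) := by
  have hlow : Tendsto (fun x : ℝ => (x / (x + s)) ^ (1 - s)) atTop (nhds 1) := by
    have h1 : Tendsto (fun x : ℝ => x / (x + s)) atTop (nhds 1) := by
      have : Tendsto (fun x : ℝ => s / (x + s)) atTop (nhds 0) :=
        tendsto_const_nhds.div_atTop (tendsto_atTop_add_const_right _ s tendsto_id)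
      have h2 : Tendsto (fun x : ℝ => 1 - s / (x + s)) atTop (nhds (1 - 0)) :=
        tendsto_const_nhds.sub this
      rw [sub_zero] at h2
      refine h2.congr' ?_
      filter_upwards [eventually_gt_atTop (max 0 (-s))] with x hx
      have hxs : 0 < x + s := by
        have := lt_of_le_of_lt (le_max_right 0 (-s)) hx; linarith
      field_simp
      ring
    simpa using h1.rpow_const (Or.inl one_ne_zero)
  refine tendsto_of_tendsto_of_tendsto_of_le_of_le' hlow tendsto_const_nhds ?_ ?_
  · filter_upwards [eventually_gt_atTop (0:ℝ)] with x hx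
    have hxs : 0 < x + s := by linarith
    have hΓx := Real.Gamma_pos_of_pos hx
    have hxp : (0:ℝ) < x ^ s := Real.rpow_pos_of_pos hx s
    have hxsp : (0:ℝ) < (x + s) ^ (1 - s) := Real.rpow_pos_of_pos hxs _
    rw [Real.div_rpow hx.le hxs.le]
    rw [div_le_div_iff₀ hxsp (by positivity)]
    have : x ^ (1 - s) * (Real.Gamma x * x ^ s) = x * Real.Gamma x := by
      rw [mul_comm (Real.Gamma x), ← mul_assoc, ← Real.rpow_add hx]
      norm_num
    rw [this]
    exact gamma_lower hx hs0 hs1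
  · filter_upwards [eventually_gt_atTop (0:ℝ)] with x hx
    have hΓx := Real.Gamma_pos_of_pos hx
    have hxp : (0:ℝ) < x ^ s := Real.rpow_pos_of_pos hx s
    rw [div_le_one (by positivity)]
    exact gamma_upper hx hs0 hs1

lemma ratio_tendsto_aux (n : ℕ) : ∀ s : ℝ, 0 ≤ s → s ≤ n →
    Tendsto (fun x => Real.Gamma (x + s) / (Real.Gamma x * x ^ s)) atTop (nhds 1) := by
  induction n with
  | zero =>
    intro s hs0 hs1
    have hs : s = 0 := le_antisymm (by exact_mod_cast hs1) hs0
    subst hs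
    refine tendsto_const_nhds.congr' ?_
    filter_upwards [eventually_gt_atTop (0:ℝ)] with x hx
    have hΓx := Real.Gamma_pos_of_pos hx
    simp [Real.rpow_zero, div_self hΓx.ne']
  | succ n ih =>
    intro s hs0 hsn
    by_cases h1 : s ≤ 1
    · exact ratio_tendsto_base hs0 h1
    · push_neg at h1
      have hA := (ih (s - 1) (by linarith) (by push_cast at hsn ⊢; linarith)).comp
        (tendsto_atTop_add_const_right atTop (1:ℝ) tendsto_id)
      have hB : Tendsto (fun x : ℝ => ((x + 1) / x) ^ (s - 1)) atTop (nhds 1) := by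
        have h2 : Tendsto (fun x : ℝ => 1 + 1 / x) atTop (nhds (1 + 0)) :=
          tendsto_const_nhds.add (tendsto_const_nhds.div_atTop tendsto_id)
        rw [add_zero] at h2
        have h3 : Tendsto (fun x : ℝ => (1 + 1 / x) ^ (s - 1)) atTop (nhds 1) := by
          simpa using h2.rpow_const (Or.inl one_ne_zero)
        refine h3.congr' ?_
        filter_upwards [eventually_gt_atTop (0:ℝ)] with x hx
        rw [add_div, div_self hx.ne']
      have := hA.mul hB
      rw [mul_one] at this
      refine this.congr' ?_
      filter_upwards [eventually_gt_atTop (0:ℝ)] with x hx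
      have hx1 : (0:ℝ) < x + 1 := by linarith
      have hΓx := Real.Gamma_pos_of_pos hx
      have hΓx1 := Real.Gamma_pos_of_pos hx1
      have hxp : (0:ℝ) < x ^ (s - 1) := Real.rpow_pos_of_pos hx _
      have hx1p : (0:ℝ) < (x + 1) ^ (s - 1) := Real.rpow_pos_of_pos hx1 _
      simp only [Function.comp]
      have e1 : x + 1 + (s - 1) = x + s := by ring
      have e2 : Real.Gamma (x + 1) = x * Real.Gamma x := Real.Gamma_add_one hx.ne'
      have e3 : ((x + 1) / x) ^ (s - 1) = (x + 1) ^ (s - 1) / x ^ (s - 1) :=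
        Real.div_rpow hx1.le hx.le _
      have e4 : x ^ s = x * x ^ (s - 1) := by
        rw [show s = 1 + (s - 1) by ring, Real.rpow_add hx, Real.rpow_one]
        ring_nf
      simp only [Function.comp, id_eq]
      rw [e1, e2, e3, e4]
      field_simp

lemma ratio_tendsto {s : ℝ} (hs : 0 ≤ s) :
    Tendsto (fun x => Real.Gamma (x + s) / (Real.Gamma x * x ^ s)) atTop (nhds 1) := by
  obtain ⟨n, hn⟩ := exists_nat_ge s
  exact ratio_tendsto_aux n s hs hn

/-- The weights `γ_n` of the backward-shift representation of `D` on `H_α`,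
`γ_n = sqrt( 2^{2/α} (n+1)² Γ((2/α)(n+1)) / Γ((2/α)(n+2)) )`. -/
noncomputable def gam (α : ℝ) (n : ℕ) : ℝ :=
  Real.sqrt ((2 : ℝ) ^ (2 / α) * ((n : ℝ) + 1) ^ 2 * Real.Gamma (2 / α * ((n : ℝ) + 1)) /
    Real.Gamma (2 / α * ((n : ℝ) + 2)))

/-- `γ_n ~ c · n^{1-1/α}` as `n → ∞` for some constant `c > 0`;
in particular `γ_n → 0` when `0 < α < 1`. -/
theorem stmt_6 (α : ℝ) (h0 : 0 < α) (h1 : α ≤ 1) :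
    (∃ c : ℝ, 0 < c ∧
      Tendsto (fun n : ℕ => gam α n / (n : ℝ) ^ (1 - 1 / α)) atTop (nhds c)) ∧
      (α < 1 → Tendsto (fun n : ℕ => gam α n) atTop (nhds 0)) := by
  set β : ℝ := 2 / α with hβ
  have hβpos : 0 < β := by positivity
  have hβ2 : 2 ≤ β := by
    rw [hβ, le_div_iff₀ h0]; linarith
  set C : ℝ := 2 ^ β / β ^ β with hC
  have hCpos : 0 < C := by positivity
  -- the rescaled squared weight
  set g : ℕ → ℝ := fun n =>
    (2 : ℝ) ^ β * ((n : ℝ) + 1) ^ 2 * Real.Gamma (β * ((n : ℝ) + 1)) /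
      Real.Gamma (β * ((n : ℝ) + 2)) / (n : ℝ) ^ (2 - β) with hg
  -- the gamma ratio along x_n = β(n+1)
  have hxtop : Tendsto (fun n : ℕ => β * ((n : ℝ) + 1)) atTop atTop := by
    apply Tendsto.const_mul_atTop hβpos
    exact tendsto_atTop_add_const_right _ 1 tendsto_natCast_atTop_atTop
  have hR : Tendsto (fun n : ℕ =>
      Real.Gamma (β * ((n : ℝ) + 1) + β) /
        (Real.Gamma (β * ((n : ℝ) + 1)) * (β * ((n : ℝ) + 1)) ^ β)) atTop (nhds 1) :=
    (ratio_tendsto hβpos.le).comp hxtop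
  -- g tendsto C
  have hgC : Tendsto g atTop (nhds C) := by
    have hinv : Tendsto (fun n : ℕ =>
        (1 : ℝ) / (Real.Gamma (β * ((n : ℝ) + 1) + β) /
          (Real.Gamma (β * ((n : ℝ) + 1)) * (β * ((n : ℝ) + 1)) ^ β))) atTop (nhds 1) := by
      simpa using hR.inv₀ one_ne_zero
    have hq : Tendsto (fun n : ℕ => (((n : ℝ) + 1) / n) ^ (2 - β)) atTop (nhds 1) := by
      have h2 : Tendsto (fun n : ℕ => 1 + 1 / (n : ℝ)) atTop (nhds (1 + 0)) :=
        tendsto_const_nhds.add (tendsto_const_nhds.div_atTop tendsto_natCast_atTop_atTop)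
      rw [add_zero] at h2
      have h3 := h2.rpow_const (p := 2 - β) (Or.inl one_ne_zero)
      rw [Real.one_rpow] at h3
      refine h3.congr' ?_
      filter_upwards [eventually_ge_atTop 1] with n hn
      have hn' : (0:ℝ) < n := by exact_mod_cast hn
      rw [add_div, div_self hn'.ne']
    have hmul : Tendsto (fun n : ℕ => C *
        ((1 : ℝ) / (Real.Gamma (β * ((n : ℝ) + 1) + β) /
          (Real.Gamma (β * ((n : ℝ) + 1)) * (β * ((n : ℝ) + 1)) ^ β))) *
        (((n : ℝ) + 1) / n) ^ (2 - β)) atTop (nhds (C * 1 * 1)) :=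
      (tendsto_const_nhds.mul hinv).mul hq
    rw [mul_one, mul_one] at hmul
    refine hmul.congr' ?_
    filter_upwards [eventually_ge_atTop 1] with n hn
    have hn' : (0:ℝ) < n := by exact_mod_cast hn
    have hn1 : (0:ℝ) < (n:ℝ) + 1 := by linarith
    have hx : (0:ℝ) < β * ((n : ℝ) + 1) := by positivity
    have hΓ1 := Real.Gamma_pos_of_pos hx
    have hΓ2 : (0:ℝ) < Real.Gamma (β * ((n : ℝ) + 2)) :=
      Real.Gamma_pos_of_pos (by nlinarith)
    have e0 : β * ((n : ℝ) + 2) = β * ((n : ℝ) + 1) + β := by ring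
    have e1 : (β * ((n : ℝ) + 1)) ^ β = β ^ β * ((n : ℝ) + 1) ^ β :=
      Real.mul_rpow hβpos.le hn1.le
    have e2 : ((n : ℝ) + 1) ^ (2:ℝ) = ((n : ℝ) + 1) ^ (2:ℕ) := Real.rpow_two _
    have e3 : (((n : ℝ) + 1) / n) ^ (2 - β) = ((n : ℝ) + 1) ^ (2 - β) / (n : ℝ) ^ (2 - β) :=
      Real.div_rpow hn1.le hn'.le _
    have e4 : ((n : ℝ) + 1) ^ ((2:ℝ) - β) = ((n : ℝ) + 1) ^ (2:ℝ) / ((n : ℝ) + 1) ^ β :=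
      Real.rpow_sub hn1 2 β
    have hΓ2' : Real.Gamma (β * ((n : ℝ) + 2)) =
        (Real.Gamma (β * ((n : ℝ) + 1) + β) /
          (Real.Gamma (β * ((n : ℝ) + 1)) * (β * ((n : ℝ) + 1)) ^ β)) *
        (Real.Gamma (β * ((n : ℝ) + 1)) * (β * ((n : ℝ) + 1)) ^ β) := by
      rw [e0, div_mul_cancel₀]
      positivity
    have hRpos : (0:ℝ) < Real.Gamma (β * ((n : ℝ) + 1) + β) /
        (Real.Gamma (β * ((n : ℝ) + 1)) * (β * ((n : ℝ) + 1)) ^ β) := by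
      have := Real.Gamma_pos_of_pos (show (0:ℝ) < β * ((n : ℝ) + 1) + β by positivity)
      positivity
    rw [hg]
    simp only
    rw [hΓ2', e3, e4, ← e2, e1, hC]
    have hnp : (0:ℝ) < (n : ℝ) ^ ((2:ℝ) - β) := Real.rpow_pos_of_pos hn' _
    have h2b : (0:ℝ) < (2:ℝ) ^ β := by positivity
    have hbb : (0:ℝ) < β ^ β := by positivity
    have hn1b : (0:ℝ) < ((n:ℝ) + 1) ^ β := by positivity
    have hn12 : (0:ℝ) < ((n:ℝ) + 1) ^ (2:ℝ) := by positivity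
    field_simp
  -- eventual identity  gam α n / n^(1-1/α) = sqrt (g n)
  have hev : ∀ᶠ n : ℕ in atTop, gam α n / (n : ℝ) ^ (1 - 1/α) = Real.sqrt (g n) := by
    filter_upwards [eventually_ge_atTop 1] with n hn
    have hn' : (0:ℝ) < n := by exact_mod_cast hn
    have hnp : (0:ℝ) < (n : ℝ) ^ (1 - 1/α) := Real.rpow_pos_of_pos hn' _
    have hS : (0:ℝ) ≤ (2 : ℝ) ^ β * ((n : ℝ) + 1) ^ 2 * Real.Gamma (β * ((n : ℝ) + 1)) /
        Real.Gamma (β * ((n : ℝ) + 2)) := by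
      have h1 : (0:ℝ) < Real.Gamma (β * ((n : ℝ) + 1)) :=
        Real.Gamma_pos_of_pos (by positivity)
      have h2 : (0:ℝ) < Real.Gamma (β * ((n : ℝ) + 2)) :=
        Real.Gamma_pos_of_pos (by positivity)
      positivity
    have e5 : (n : ℝ) ^ ((2:ℝ) - β) = (n : ℝ) ^ (1 - 1/α) * (n : ℝ) ^ (1 - 1/α) := by
      rw [← Real.rpow_add hn']
      congr 1
      rw [hβ]; field_simp; ring
    rw [hg]
    simp only
    rw [Real.sqrt_div hS, e5, Real.sqrt_mul_self hnp.le]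
    rfl
  have key : Tendsto (fun n : ℕ => gam α n / (n : ℝ) ^ (1 - 1/α)) atTop
      (nhds (Real.sqrt C)) := by
    have := (Real.continuous_sqrt.continuousAt.tendsto.comp hgC)
    exact this.congr' (by filter_upwards [hev] with n h using h.symm)
  refine ⟨⟨Real.sqrt C, Real.sqrt_pos.2 hCpos, key⟩, ?_⟩
  intro hα
  have hneg : 0 < 1/α - 1 := by
    rw [lt_sub_iff_add_lt, zero_add, lt_div_iff₀ h0, one_mul]; exact hα
  have hzero : Tendsto (fun n : ℕ => (n : ℝ) ^ (1 - 1/α)) atTop (nhds 0) := by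
    have := (tendsto_rpow_neg_atTop hneg).comp tendsto_natCast_atTop_atTop
    simpa [Function.comp_def, neg_sub] using this
  have := key.mul hzero
  rw [mul_zero] at this
  refine this.congr' ?_
  filter_upwards [eventually_ge_atTop 1] with n hn
  have hn' : (0:ℝ) < n := by exact_mod_cast hn
  have hnp : (0:ℝ) < (n : ℝ) ^ (1 - 1/α) := Real.rpow_pos_of_pos hn' _
  field_simp
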